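/- If the free semigroup action G on X is chain transitive, then for every ε > 0 the ε-chain recurrence times satisfy r_ε(G) ≤ r_ε(F), where F is the associated skew-product transformation; and if G is chain mixing, then for all 0 < ε < δ the chain mixing times satisfy m_ε(δ,G) ≤ m_ε(δ,F). -/

import Mathlib

open Metric Filter Set
open scoped Classical

noncomputable section

variable {X : Type*} [MetricSpace X] {Y : Type*} [MetricSpace Y] {ι κ : Type*}

/-- `c` satisfies the `(w, δ)`-chain condition along the word `w`. -/
def IsChainSeq (f : ι → X → X) (w : List ι) (δ : ℝ) (c : ℕ → X) : Prop :=
  ∀ (j : ℕ) (h : j < w.length), dist (f (w.get ⟨j, h⟩) (c j)) (c (j + 1)) ≤ δ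

/-- There is a `(w, δ)`-chain from `a` to `b` with `|w| = n`. -/
def ChainFrom (f : ι → X → X) (δ : ℝ) (a b : X) (n : ℕ) : Prop :=
  ∃ w : List ι, w.length = n ∧ ∃ c : ℕ → X, IsChainSeq f w δ c ∧ c 0 = a ∧ c n = b

/-- `x` is a chain recurrent point of the action generated by `f`. -/
def ChainRecurrentPt (f : ι → X → X) (x : X) : Prop :=
  ∀ ε : ℝ, 0 < ε → ∃ n : ℕ, 0 < n ∧ ChainFrom f ε x x n

/-- The action generated by `f` is chain recurrent. -/
def ChainRecurrent (f : ι → X → X) : Prop := ∀ x : X, ChainRecurrentPt f x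

/-- The action generated by `f` is chain transitive. -/
def ChainTransitive (f : ι → X → X) : Prop :=
  ∀ ε : ℝ, 0 < ε → ∀ a b : X, ∃ n : ℕ, 0 < n ∧ ChainFrom f ε a b n

/-- The action generated by `f` is chain mixing. -/
def ChainMixing (f : ι → X → X) : Prop :=
  ∀ ε : ℝ, 0 < ε → ∃ N : ℕ, 0 < N ∧ ∀ a b : X, ∀ n : ℕ, N ≤ n → ChainFrom f ε a b n

/-- The `ε`-chain recurrence time `r_ε(x, G)`. -/
def rTime (f : ι → X → X) (ε : ℝ) (x : X) : ℕ :=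
  sInf {n : ℕ | 0 < n ∧ ChainFrom f ε x x n}

/-- `r_ε(G) = max_x r_ε(x, G)`. -/
def rTimeSup (f : ι → X → X) (ε : ℝ) : ℕ :=
  sSup (Set.range fun x : X => rTime f ε x)

/-- The chain mixing time `m_ε(x, δ, G)`. -/
def mTime (f : ι → X → X) (ε δ : ℝ) (x : X) : ℕ :=
  sInf {N : ℕ | ∀ n : ℕ, N ≤ n → ∀ y : X, ∃ z : X, dist z x < δ ∧ ChainFrom f ε z y n}

/-- `m_ε(δ, G) = max_x m_ε(x, δ, G)`. -/
def mTimeSup (f : ι → X → X) (ε δ : ℝ) : ℕ :=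
  sSup (Set.range fun x : X => mTime f ε δ x)

/-- `f_w = f_{i₀} ∘ f_{i₁} ∘ ⋯ ∘ f_{i_{k-1}}` applied to `x`. -/
def applyWord (f : ι → X → X) (w : List ι) (x : X) : X := w.foldr f x

/-- The generators of `G^k`, indexed by the words of length `k`. -/
def powerGens (f : ι → X → X) (k : ℕ) : (Fin k → ι) → X → X :=
  fun u => applyWord f (List.ofFn u)

/-- The generators `f_j × g_k` of the product action `G × H`. -/
def prodGens (f : ι → X → X) (g : κ → Y → Y) : ι × κ → X × Y → X × Y :=
  fun p z => (f p.1 z.1, g p.2 z.2)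

/-- `T_ε(x)`: the set of lengths of `(w, ε)`-chains from `x` to itself. -/
def Tset (f : ι → X → X) (ε : ℝ) (x : X) : Set ℕ :=
  {n : ℕ | 0 < n ∧ ChainFrom f ε x x n}

/-- `k = gcd T` for a set `T ⊆ ℕ`. -/
def IsGCDOf (T : Set ℕ) (k : ℕ) : Prop :=
  (∀ t ∈ T, k ∣ t) ∧ ∀ d : ℕ, (∀ t ∈ T, d ∣ t) → d ∣ k

/-- `x ∼_ε y`: there is an `(w, ε)`-chain from `x` to `y` whose length is a multiple of `k`. -/
def RelEps (f : ι → X → X) (ε : ℝ) (k : ℕ) (x y : X) : Prop :=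
  ∃ n : ℕ, 0 < n ∧ k ∣ n ∧ ChainFrom f ε x y n

/-- The orbit segment: the first `j` letters of `w` applied, in order, to `x`. -/
def orbitSeg (f : ι → X → X) (w : List ι) (x : X) (j : ℕ) : X :=
  (w.take j).foldl (fun y i => f i y) x

/-- The Bowen-type word metric `d_w`. -/
def wordDist (f : ι → X → X) (w : List ι) (x y : X) : ℝ :=
  ⨆ j : Fin (w.length + 1), dist (orbitSeg f w x (j : ℕ)) (orbitSeg f w y (j : ℕ))

/-- `N(w, ε, G)`: maximal cardinality of a `(w, ε, G)`-separated subset of `X`. -/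
def sepMax (f : ι → X → X) (w : List ι) (ε : ℝ) : ℕ :=
  sSup {k : ℕ | ∃ K : Finset X,
    (∀ x ∈ K, ∀ y ∈ K, x ≠ y → ε ≤ wordDist f w x y) ∧ K.card = k}

/-- Bufetov's topological entropy `h(G)` of a free semigroup action. -/
def topEntropy {m : ℕ} (f : Fin m → X → X) : ℝ :=
  ⨆ ε : {e : ℝ // 0 < e},
    Filter.limsup (fun n : ℕ =>
      Real.log ((∑ w : Fin n → Fin m, (sepMax f (List.ofFn w) ε.1 : ℝ)) / (m : ℝ) ^ n) / (n : ℝ))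
      Filter.atTop

/-- `N*(w, ε, δ, G)`: maximal cardinality of a `(w, ε, δ, G)`-pseudo-separated set. -/
def pseudoSepMax (f : ι → X → X) (w : List ι) (ε δ : ℝ) : ℕ :=
  sSup {k : ℕ | ∃ K : Finset (ℕ → X),
    (∀ c ∈ K, IsChainSeq f w δ c) ∧
    (∀ c ∈ K, ∀ c' ∈ K, c ≠ c' → ∃ j : ℕ, j < w.length ∧ ε < dist (c j) (c' j)) ∧
    K.card = k}

/-- `B*(w, ε, δ, G)`: minimal cardinality of a `(w, ε, δ, G)`-pseudo-spanning set. -/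
def pseudoSpanMin (f : ι → X → X) (w : List ι) (ε δ : ℝ) : ℕ :=
  sInf {k : ℕ | ∃ K : Finset (ℕ → X),
    (∀ c ∈ K, IsChainSeq f w δ c) ∧
    (∀ c : ℕ → X, IsChainSeq f w δ c →
      ∃ c' ∈ K, ∀ j : ℕ, j < w.length → dist (c j) (c' j) ≤ ε) ∧
    K.card = k}

/-- The pseudo-entropy `h*(G)` of a free semigroup action. -/
def pseudoEntropy {m : ℕ} (f : Fin m → X → X) : ℝ :=
  ⨆ ε : {e : ℝ // 0 < e}, ⨅ δ : {d : ℝ // 0 < d},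
    Filter.limsup (fun n : ℕ =>
      Real.log ((∑ w : Fin n → Fin m, (pseudoSepMax f (List.ofFn w) ε.1 δ.1 : ℝ)) / (m : ℝ) ^ n)
        / (n : ℝ)) Filter.atTop

/-- The metric `d'(ω, ω') = m^{-k}`, `k = inf {n | ωₙ ≠ ω'ₙ}`, on `Σ_m^+ = ℕ → Fin m`. -/
def sigmaDist (m : ℕ) (ω ω' : ℕ → Fin m) : ℝ :=
  if h : ∃ n : ℕ, ω n ≠ ω' n then (1 / (m : ℝ)) ^ Nat.find h else 0

/-- The metric `D = max {d', d}` on `Σ_m^+ × X`. -/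
def skewDist (m : ℕ) (p q : (ℕ → Fin m) × X) : ℝ :=
  max (sigmaDist m p.1 q.1) (dist p.2 q.2)

/-- The skew-product transformation `F(ω, x) = (σ ω, f_{ω 0} x)`. -/
def skewMap {m : ℕ} (f : Fin m → X → X) : (ℕ → Fin m) × X → (ℕ → Fin m) × X :=
  fun p => (fun n => p.1 (n + 1), f (p.1 0) p.2)

/-- `c` is a `δ`-pseudo-orbit of length `n + 1` of the single map `F`,
w.r.t. the distance function `D`. -/
def IsPseudoOrbit {Z : Type*} (D : Z → Z → ℝ) (F : Z → Z) (n : ℕ) (δ : ℝ) (c : ℕ → Z) : Prop :=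
  ∀ j : ℕ, j < n → D (F (c j)) (c (j + 1)) ≤ δ

/-- `N*(n, ε, δ, F)` for a single map `F` w.r.t. a distance function `D`. -/
def pseudoSepMaxMap {Z : Type*} (D : Z → Z → ℝ) (F : Z → Z) (n : ℕ) (ε δ : ℝ) : ℕ :=
  sSup {k : ℕ | ∃ K : Finset (ℕ → Z),
    (∀ c ∈ K, IsPseudoOrbit D F n δ c) ∧
    (∀ c ∈ K, ∀ c' ∈ K, c ≠ c' → ∃ j : ℕ, j < n ∧ ε < D (c j) (c' j)) ∧
    K.card = k}

/-- `B*(n, ε, δ, F)` for a single map `F` w.r.t. a distance function `D`. -/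
def pseudoSpanMinMap {Z : Type*} (D : Z → Z → ℝ) (F : Z → Z) (n : ℕ) (ε δ : ℝ) : ℕ :=
  sInf {k : ℕ | ∃ K : Finset (ℕ → Z),
    (∀ c ∈ K, IsPseudoOrbit D F n δ c) ∧
    (∀ c : ℕ → Z, IsPseudoOrbit D F n δ c →
      ∃ c' ∈ K, ∀ j : ℕ, j ≤ n → D (c j) (c' j) ≤ ε) ∧
    K.card = k}

/-- The pseudo-entropy `h*(F)` of a single map `F` w.r.t. a distance function `D`. -/
def pseudoEntropyMap {Z : Type*} (D : Z → Z → ℝ) (F : Z → Z) : ℝ :=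
  ⨆ ε : {e : ℝ // 0 < e}, ⨅ δ : {d : ℝ // 0 < d},
    Filter.limsup (fun n : ℕ =>
      Real.log (pseudoSepMaxMap D F n ε.1 δ.1 : ℝ) / (n : ℝ)) Filter.atTop

/-- An `ε`-chain of length `n` from `a` to `b` for a single map. -/
def ChainFromMap {Z : Type*} (D : Z → Z → ℝ) (F : Z → Z) (δ : ℝ) (a b : Z) (n : ℕ) : Prop :=
  ∃ c : ℕ → Z, IsPseudoOrbit D F n δ c ∧ c 0 = a ∧ c n = b

/-- `r_ε(z, F)` for a single map. -/
def rTimeMap {Z : Type*} (D : Z → Z → ℝ) (F : Z → Z) (ε : ℝ) (z : Z) : ℕ :=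
  sInf {n : ℕ | 0 < n ∧ ChainFromMap D F ε z z n}

/-- `r_ε(F)` for a single map. -/
def rTimeMapSup {Z : Type*} (D : Z → Z → ℝ) (F : Z → Z) (ε : ℝ) : ℕ :=
  sSup (Set.range fun z : Z => rTimeMap D F ε z)

/-- `m_ε(z, δ, F)` for a single map. -/
def mTimeMap {Z : Type*} (D : Z → Z → ℝ) (F : Z → Z) (ε δ : ℝ) (z : Z) : ℕ :=
  sInf {N : ℕ | ∀ n : ℕ, N ≤ n → ∀ y : Z, ∃ z' : Z, D z' z < δ ∧ ChainFromMap D F ε z' y n}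

/-- `m_ε(δ, F)` for a single map. -/
def mTimeMapSup {Z : Type*} (D : Z → Z → ℝ) (F : Z → Z) (ε δ : ℝ) : ℕ :=
  sSup (Set.range fun z : Z => mTimeMap D F ε δ z)

/-- `N_δ(X)`: the smallest number of sets of diameter at most `δ` that cover `X`. -/
def coverNum (X : Type*) [MetricSpace X] (δ : ℝ) : ℕ :=
  sInf {k : ℕ | ∃ S : Finset (Set X),
    (∀ s ∈ S, Metric.diam s ≤ δ) ∧ (⋃ s ∈ S, s) = Set.univ ∧ S.card = k}

/-- The upper box dimension of `X`. -/
def upperBoxDim (X : Type*) [MetricSpace X] : ℝ :=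
  Filter.limsup (fun δ : ℝ => Real.log (coverNum X δ : ℝ) / (-Real.log δ))
    (nhdsWithin 0 (Set.Ioi 0))

/-- The lower box dimension of `X`. -/
def lowerBoxDim (X : Type*) [MetricSpace X] : ℝ :=
  Filter.liminf (fun δ : ℝ => Real.log (coverNum X δ : ℝ) / (-Real.log δ))
    (nhdsWithin 0 (Set.Ioi 0))

end

section AuxStmt17

variable {X : Type*} [MetricSpace X]

private lemma sigmaDist_self' {m : ℕ} (ω : ℕ → Fin m) : sigmaDist m ω ω = 0 := by
  simp [sigmaDist]

private lemma sigmaDist_le_of_agree {m : ℕ} (hm : 0 < m) {L : ℕ} {ω ω' : ℕ → Fin m}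
    (h : ∀ i < L, ω i = ω' i) : sigmaDist m ω ω' ≤ (1 / (m : ℝ)) ^ L := by
  unfold sigmaDist
  split_ifs with hex
  · have hfind : L ≤ Nat.find hex := by
      rw [Nat.le_find_iff]
      intro i hi
      simpa using h i hi
    have h0 : (0:ℝ) ≤ 1 / (m:ℝ) := by positivity
    have h1 : (1:ℝ) / (m:ℝ) ≤ 1 := by
      rw [div_le_one (by exact_mod_cast hm)]
      exact_mod_cast hm
    exact pow_le_pow_of_le_one h0 h1 hfind
  · positivity

private lemma exists_L {m : ℕ} (hm : 0 < m) {ε : ℝ} (hε : 0 < ε) :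
    ∃ L, ∀ ω ω' : ℕ → Fin m, (∀ i < L, ω i = ω' i) → sigmaDist m ω ω' ≤ ε := by
  rcases eq_or_lt_of_le (show 1 ≤ m from hm) with h1 | h2
  · refine ⟨0, fun ω ω' _ => ?_⟩
    have : ω = ω' := by
      funext i
      rcases h1 with rfl
      exact Subsingleton.elim _ _
    rw [this, sigmaDist_self']
    exact hε.le
  · obtain ⟨L, hL⟩ := exists_pow_lt_of_lt_one hε (by norm_num : (1:ℝ)/2 < 1)
    refine ⟨L, fun ω ω' hag => ?_⟩
    have h12 : (1:ℝ) / (m:ℝ) ≤ 1 / 2 := by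
      apply one_div_le_one_div_of_le (by norm_num)
      exact_mod_cast h2
    calc sigmaDist m ω ω' ≤ (1 / (m:ℝ)) ^ L := sigmaDist_le_of_agree hm hag
      _ ≤ ((1:ℝ)/2) ^ L := pow_le_pow_left₀ (by positivity) h12 L
      _ ≤ ε := hL.le

private def symbSeq {m : ℕ} (n : ℕ) (w t : ℕ → Fin m) (j : ℕ) : ℕ → Fin m :=
  fun i => if j + i < n then w (j + i) else t (j + i - n)

private lemma symbSeq_shift {m n : ℕ} (w t : ℕ → Fin m) (j : ℕ) :
    (fun i => symbSeq n w t j (i + 1)) = symbSeq n w t (j + 1) := by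
  funext i
  unfold symbSeq
  have h : j + (i + 1) = (j + 1) + i := by omega
  rw [h]

private lemma symbSeq_zero {m n : ℕ} (w t : ℕ → Fin m) (j : ℕ) (h : j < n) :
    symbSeq n w t j 0 = w j := by
  unfold symbSeq
  simp [h]

private lemma symbSeq_last {m n : ℕ} (w t : ℕ → Fin m) : symbSeq n w t n = t := by
  funext i
  unfold symbSeq
  rw [if_neg (by omega)]
  congr 1
  omega

private lemma chainFrom_of_fn {ι : Type*} (f : ι → X → X) {δ : ℝ} {a b : X} {n : ℕ}
    (w : ℕ → ι) (c : ℕ → X) (h : ∀ j < n, dist (f (w j) (c j)) (c (j + 1)) ≤ δ)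
    (h0 : c 0 = a) (hn : c n = b) : ChainFrom f δ a b n := by
  refine ⟨List.ofFn (fun j : Fin n => w j), by simp, c, ?_, h0, hn⟩
  intro j hj
  have hjn : j < n := by simpa using hj
  have hget : (List.ofFn (fun j : Fin n => w j)).get ⟨j, hj⟩ = w j := by
    simp [List.get_ofFn]
  rw [hget]
  exact h j hjn

private lemma chainFrom_fn {ι : Type*} (i0 : ι) (f : ι → X → X) {δ : ℝ} {a b : X} {n : ℕ}
    (h : ChainFrom f δ a b n) :
    ∃ (w : ℕ → ι) (c : ℕ → X),
      (∀ j < n, dist (f (w j) (c j)) (c (j + 1)) ≤ δ) ∧ c 0 = a ∧ c n = b := by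
  obtain ⟨wl, hlen, c, hc, h0, hn⟩ := h
  refine ⟨fun j => if hj : j < wl.length then wl.get ⟨j, hj⟩ else i0, c, ?_, h0, hn⟩
  intro j hj
  have hj' : j < wl.length := by omega
  simp only [dif_pos hj']
  exact hc j hj'

private lemma chain_main {m : ℕ} (f : Fin m → X → X) {ε : ℝ} (hε : 0 ≤ ε)
    {n : ℕ} (hn : 0 < n) (w : ℕ → Fin m) (x : ℕ → X) (ω₀ t : ℕ → Fin m)
    (h0sym : sigmaDist m (fun i => ω₀ (i + 1)) (symbSeq n w t 1) ≤ ε)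
    (h0x : dist (f (ω₀ 0) (x 0)) (x 1) ≤ ε)
    (hx : ∀ j, 0 < j → j < n → dist (f (w j) (x j)) (x (j + 1)) ≤ ε) :
    ChainFromMap (skewDist (X := X) m) (skewMap f) ε (ω₀, x 0) (t, x n) n := by
  refine ⟨fun j => if j = 0 then (ω₀, x 0) else (symbSeq n w t j, x j), ?_, by simp, ?_⟩
  · intro j hj
    by_cases h0 : j = 0
    · subst h0
      simp only [if_pos rfl, if_neg one_ne_zero]
      show max (sigmaDist m (fun i => ω₀ (i + 1)) (symbSeq n w t 1))
        (dist (f (ω₀ 0) (x 0)) (x 1)) ≤ ε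
      exact max_le h0sym h0x
    · have hjpos : 0 < j := Nat.pos_of_ne_zero h0
      simp only [if_neg h0, if_neg (Nat.succ_ne_zero j)]
      show max (sigmaDist m (fun i => symbSeq n w t j (i + 1)) (symbSeq n w t (j + 1)))
        (dist (f (symbSeq n w t j 0) (x j)) (x (j + 1))) ≤ ε
      rw [symbSeq_shift, sigmaDist_self', symbSeq_zero w t j hj]
      exact max_le hε (hx j hjpos hj)
  · show (if n = 0 then (ω₀, x 0) else (symbSeq n w t n, x n)) = (t, x n)
    rw [if_neg (by omega : ¬ n = 0), symbSeq_last]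

private lemma chainA {m : ℕ} (f : Fin m → X → X) {ε : ℝ} (hε : 0 ≤ ε)
    {n : ℕ} (hn : 0 < n) (w : ℕ → Fin m) (x : ℕ → X) (t : ℕ → Fin m)
    (hx : ∀ j < n, dist (f (w j) (x j)) (x (j + 1)) ≤ ε) :
    ChainFromMap (skewDist (X := X) m) (skewMap f) ε (symbSeq n w t 0, x 0) (t, x n) n := by
  apply chain_main f hε hn w x _ t
  · have h01 : (0:ℕ) + 1 = 1 := rfl
    rw [symbSeq_shift w t 0, h01, sigmaDist_self']
    exact hε
  · rw [symbSeq_zero w t 0 hn]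
    exact hx 0 hn
  · exact fun j _ hjn => hx j hjn

private lemma proj_chain {m : ℕ} (f : Fin m → X → X) {ε : ℝ} {z z' : (ℕ → Fin m) × X} {n : ℕ}
    (h : ChainFromMap (skewDist (X := X) m) (skewMap f) ε z z' n) :
    ChainFrom f ε z.2 z'.2 n := by
  obtain ⟨c, hc, h0, hn⟩ := h
  refine chainFrom_of_fn f (fun j => (c j).1 0) (fun j => (c j).2) ?_ (congrArg Prod.snd h0) (congrArg Prod.snd hn)
  intro j hj
  have h1 := hc j hj
  exact le_trans (le_max_right _ _) h1

private def orbF {m : ℕ} (f : Fin m → X → X) (ω : ℕ → Fin m) (x : X) : ℕ → X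
  | 0 => x
  | j + 1 => f (ω j) (orbF f ω x j)

private lemma uniform_trans {m : ℕ} [CompactSpace X] (hm : 0 < m) (f : Fin m → X → X)
    (hf : ∀ i, Continuous (f i)) (hct : ChainTransitive f) {ε : ℝ} (hε : 0 < ε) :
    ∃ N, ∀ a b : X, ∃ n, 0 < n ∧ n ≤ N ∧ ChainFrom f ε a b n := by
  haveI : Nonempty (Fin m) := Fin.pos_iff_nonempty.mp hm
  have hε3 : 0 < ε / 3 := by linarith
  have huc : ∀ i : Fin m, ∃ η > 0, ∀ x y : X, dist x y < η → dist (f i x) (f i y) < ε / 3 := by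
    intro i
    have h1 := CompactSpace.uniformContinuous_of_continuous (hf i)
    rw [Metric.uniformContinuous_iff] at h1
    obtain ⟨η, hη, h⟩ := h1 (ε / 3) hε3
    exact ⟨η, hη, fun x y hxy => h hxy⟩
  choose η hη hηf using huc
  set η0 : ℝ := Finset.univ.inf' Finset.univ_nonempty η with hη0
  have hη0pos : 0 < η0 := by
    rw [hη0, Finset.lt_inf'_iff]
    exact fun i _ => hη i
  have hη0le : ∀ i, η0 ≤ η i := fun i => Finset.inf'_le _ (Finset.mem_univ i)
  have hch : ∀ p : X × X, ∃ n, 0 < n ∧ ChainFrom f (ε / 3) p.1 p.2 n :=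
    fun p => hct (ε / 3) hε3 p.1 p.2
  choose nn hnpos hnch using hch
  have hcov : (Set.univ : Set (X × X)) ⊆
      ⋃ p : X × X, Metric.ball p.1 η0 ×ˢ Metric.ball p.2 (ε / 3) := by
    intro p _
    exact Set.mem_iUnion.mpr ⟨p, by simp [hη0pos, hε3]⟩
  obtain ⟨tt, htt⟩ := isCompact_univ.elim_finite_subcover
    (fun p : X × X => Metric.ball p.1 η0 ×ˢ Metric.ball p.2 (ε / 3))
    (fun p => Metric.isOpen_ball.prod Metric.isOpen_ball) hcov
  refine ⟨tt.sup nn, fun a b => ?_⟩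
  obtain ⟨p, hp, hmem⟩ := Set.mem_iUnion₂.mp (htt (Set.mem_univ (a, b)))
  obtain ⟨ha, hb⟩ := hmem
  simp only [Metric.mem_ball] at ha hb
  obtain ⟨w, c, hc, h0, hend⟩ := chainFrom_fn (Classical.arbitrary (Fin m)) f (hnch p)
  set k := nn p with hk
  refine ⟨k, hnpos p, Finset.le_sup hp, ?_⟩
  refine chainFrom_of_fn f w (fun j => if j = 0 then a else if j = k then b else c j)
    ?_ (by simp) (by simp [show k ≠ 0 from Nat.pos_iff_ne_zero.mp (hnpos p)])
  intro j hj
  have hfa : dist (f (w 0) a) (f (w 0) (c 0)) < ε / 3 := by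
    apply hηf
    rw [h0]
    exact lt_of_lt_of_le ha (hη0le (w 0))
  show dist (f (w j) (if j = 0 then a else if j = k then b else c j))
      (if j + 1 = 0 then a else if j + 1 = k then b else c (j + 1)) ≤ ε
  by_cases hj0 : j = 0
  · subst hj0
    simp only [Nat.zero_add, if_pos rfl, if_neg one_ne_zero]
    by_cases hk1 : (1:ℕ) = k
    · rw [if_pos hk1]
      have h1 : dist (f (w 0) (c 0)) (c 1) ≤ ε / 3 := hc 0 hj
      have hc1 : c 1 = p.2 := by rw [hk1]; exact hend
      have h2 : dist (c 1) b < ε / 3 := by rw [hc1, dist_comm]; exact hb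
      calc dist (f (w 0) a) b
          ≤ dist (f (w 0) a) (f (w 0) (c 0)) + dist (f (w 0) (c 0)) (c 1) + dist (c 1) b :=
            dist_triangle4 _ _ _ _
        _ ≤ ε / 3 + ε / 3 + ε / 3 := by
            exact add_le_add (add_le_add hfa.le h1) h2.le
        _ = ε := by ring
    · rw [if_neg hk1]
      have h1 : dist (f (w 0) (c 0)) (c 1) ≤ ε / 3 := hc 0 hj
      calc dist (f (w 0) a) (c 1)
          ≤ dist (f (w 0) a) (f (w 0) (c 0)) + dist (f (w 0) (c 0)) (c 1) := dist_triangle _ _ _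
        _ ≤ ε / 3 + ε / 3 := add_le_add hfa.le h1
        _ ≤ ε := by linarith
  · rw [if_neg hj0, if_neg (by omega : ¬ j = k), if_neg (by omega : ¬ j + 1 = 0)]
    by_cases hjk : j + 1 = k
    · rw [if_pos hjk]
      have h1 : dist (f (w j) (c j)) (c (j + 1)) ≤ ε / 3 := hc j hj
      have h2 : dist (c (j + 1)) b < ε / 3 := by
        rw [hjk, hend, dist_comm]; exact hb
      calc dist (f (w j) (c j)) b
          ≤ dist (f (w j) (c j)) (c (j + 1)) + dist (c (j + 1)) b := dist_triangle _ _ _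
        _ ≤ ε / 3 + ε / 3 := add_le_add h1 h2.le
        _ ≤ ε := by linarith
    · rw [if_neg hjk]
      exact le_trans (hc j hj) (by linarith)

end AuxStmt17

theorem stmt17 {X : Type*} [MetricSpace X] [CompactSpace X] {m : ℕ} (hm : 0 < m)
    (f : Fin m → X → X) (hf : ∀ i, Continuous (f i)) :
    (ChainTransitive f → ∀ ε : ℝ, 0 < ε →
      rTimeSup f ε ≤ rTimeMapSup (skewDist (X := X) m) (skewMap f) ε) ∧
      (ChainMixing f → ∀ ε δ : ℝ, 0 < ε → ε < δ →
        mTimeSup f ε δ ≤ mTimeMapSup (skewDist (X := X) m) (skewMap f) ε δ) := by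
  have i0 : Fin m := ⟨0, hm⟩
  constructor
  · -- chain transitive part
    intro hct ε hε
    obtain ⟨L, hL⟩ := exists_L hm hε
    obtain ⟨Nu, hNu⟩ := uniform_trans hm f hf hct hε
    -- key: for every z there is a return F-chain of bounded positive length
    have key : ∀ z : (ℕ → Fin m) × X, ∃ nz, 0 < nz ∧ nz ≤ L + 1 + Nu ∧
        ChainFromMap (skewDist (X := X) m) (skewMap f) ε z z nz := by
      rintro ⟨ω, x⟩
      obtain ⟨k, hk, hkNu, hchain⟩ := hNu (orbF f ω x (L + 1)) x
      obtain ⟨v, c, hcc, hc0, hck⟩ := chainFrom_fn i0 f hchain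
      set n := L + 1 + k with hn
      set w : ℕ → Fin m := fun j => if j ≤ L then ω j else v (j - (L + 1)) with hw
      set xs : ℕ → X := fun j => if j < L + 1 then orbF f ω x j else c (j - (L + 1)) with hxs
      have hxsorb : ∀ j ≤ L + 1, xs j = orbF f ω x j := by
        intro j hj
        by_cases h : j < L + 1
        · simp only [hxs, if_pos h]
        · have hjl : j = L + 1 := by omega
          subst hjl
          simp only [hxs, if_neg h, Nat.sub_self]
          exact hc0
      have hstep : ∀ j, 0 < j → j < n → dist (f (w j) (xs j)) (xs (j + 1)) ≤ ε := by
        intro j hj0 hjn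
        by_cases hjL : j ≤ L
        · have e1 : w j = ω j := by simp only [hw, if_pos hjL]
          have e2 : xs j = orbF f ω x j := hxsorb j (by omega)
          have e3 : xs (j + 1) = orbF f ω x (j + 1) := hxsorb (j + 1) (by omega)
          rw [e1, e2, e3]
          simp [orbF, hε.le]
        · have e1 : w j = v (j - (L + 1)) := by simp only [hw, if_neg hjL]
          have e2 : xs j = c (j - (L + 1)) := by
            simp only [hxs, if_neg (by omega : ¬ j < L + 1)]
          have e3 : xs (j + 1) = c (j - (L + 1) + 1) := by
            simp only [hxs, if_neg (by omega : ¬ j + 1 < L + 1)]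
            congr 1
            omega
          rw [e1, e2, e3]
          exact hcc (j - (L + 1)) (by omega)
      have h0x : dist (f (ω 0) (xs 0)) (xs 1) ≤ ε := by
        have e0 : xs 0 = orbF f ω x 0 := hxsorb 0 (by omega)
        have e1 : xs 1 = orbF f ω x 1 := hxsorb 1 (by omega)
        rw [e0, e1]
        simp [orbF, hε.le]
      have h0sym : sigmaDist m (fun i => ω (i + 1)) (symbSeq n w ω 1) ≤ ε := by
        apply hL
        intro i hi
        have h1 : 1 + i < n := by omega
        simp only [symbSeq, if_pos h1, hw, if_pos (by omega : 1 + i ≤ L)]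
        rw [Nat.add_comm]
      have hmain := chain_main f hε.le (by omega : 0 < n) w xs ω ω h0sym h0x hstep
      have e0 : xs 0 = x := hxsorb 0 (by omega)
      have en : xs n = x := by
        have : xs n = c (n - (L + 1)) := by
          simp only [hxs, if_neg (by omega : ¬ n < L + 1)]
        rw [this, (by omega : n - (L + 1) = k), hck]
      rw [e0, en] at hmain
      exact ⟨n, by omega, by omega, hmain⟩
    have hbd : ∀ z, rTimeMap (skewDist (X := X) m) (skewMap f) ε z ≤ L + 1 + Nu := by
      intro z
      obtain ⟨nz, h1, h2, h3⟩ := key z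
      exact le_trans (Nat.sInf_le ⟨h1, h3⟩) h2
    apply csSup_le'
    rintro v ⟨x, rfl⟩
    set z : (ℕ → Fin m) × X := (fun _ => i0, x) with hz
    have hneF : {n | 0 < n ∧
        ChainFromMap (skewDist (X := X) m) (skewMap f) ε z z n}.Nonempty := by
      obtain ⟨nz, h1, _, h3⟩ := key z
      exact ⟨nz, h1, h3⟩
    have hmemF := Nat.sInf_mem hneF
    have h1 : rTime f ε x ≤ rTimeMap (skewDist (X := X) m) (skewMap f) ε z :=
      Nat.sInf_le ⟨hmemF.1, proj_chain f hmemF.2⟩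
    have h2 : rTimeMap (skewDist (X := X) m) (skewMap f) ε z ≤
        rTimeMapSup (skewDist (X := X) m) (skewMap f) ε :=
      le_csSup ⟨L + 1 + Nu, by rintro _ ⟨z', rfl⟩; exact hbd z'⟩ (Set.mem_range_self z)
    exact h1.trans h2
  · -- chain mixing part
    intro hcm ε δ hε hεδ
    obtain ⟨L, hL⟩ := exists_L hm hε
    obtain ⟨N, hNpos, hN⟩ := hcm ε hε
    have key : ∀ z : (ℕ → Fin m) × X, (L + N) ∈
        {N' | ∀ n, N' ≤ n → ∀ y : (ℕ → Fin m) × X, ∃ z',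
          skewDist (X := X) m z' z < δ ∧
          ChainFromMap (skewDist (X := X) m) (skewMap f) ε z' y n} := by
      rintro ⟨ω, x⟩ n hn ⟨ω', yx⟩
      have hchain := hN (orbF f ω x L) yx (n - L) (by omega)
      obtain ⟨v, c, hcc, hc0, hck⟩ := chainFrom_fn i0 f hchain
      set w : ℕ → Fin m := fun j => if j < L then ω j else v (j - L) with hw
      set xs : ℕ → X := fun j => if j < L then orbF f ω x j else c (j - L) with hxs
      have hxsorb : ∀ j ≤ L, xs j = orbF f ω x j := by
        intro j hj
        by_cases h : j < L
        · simp only [hxs, if_pos h]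
        · have hjl : j = L := by omega
          subst hjl
          simp only [hxs, if_neg h, Nat.sub_self]
          exact hc0
      have hstep : ∀ j < n, dist (f (w j) (xs j)) (xs (j + 1)) ≤ ε := by
        intro j hjn
        by_cases hjL : j < L
        · have e1 : w j = ω j := by simp only [hw, if_pos hjL]
          have e2 : xs j = orbF f ω x j := hxsorb j (by omega)
          have e3 : xs (j + 1) = orbF f ω x (j + 1) := hxsorb (j + 1) (by omega)
          rw [e1, e2, e3]
          simp [orbF, hε.le]
        · have e1 : w j = v (j - L) := by simp only [hw, if_neg hjL]
          have e2 : xs j = c (j - L) := by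
            simp only [hxs, if_neg hjL]
          have e3 : xs (j + 1) = c (j - L + 1) := by
            simp only [hxs, if_neg (by omega : ¬ j + 1 < L)]
            congr 1
            omega
          rw [e1, e2, e3]
          exact hcc (j - L) (by omega)
      have hnpos : 0 < n := by omega
      have hmain := chainA f hε.le hnpos w xs ω' hstep
      have e0 : xs 0 = x := by
        rw [hxsorb 0 (by omega)]
        rfl
      have en : xs n = yx := by
        by_cases h : n < L
        · omega
        · simp only [hxs, if_neg h]
          rw [hck]
      rw [e0, en] at hmain
      refine ⟨(symbSeq n w ω' 0, x), ?_, hmain⟩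
      have hσ : sigmaDist m (symbSeq n w ω' 0) ω ≤ ε := by
        apply hL
        intro i hi
        simp only [symbSeq, Nat.zero_add, if_pos (by omega : i < n), hw,
          if_pos hi]
      have hdd : dist x x = 0 := dist_self x
      show max (sigmaDist m (symbSeq n w ω' 0) ω) (dist x x) < δ
      rw [hdd]
      exact max_lt (lt_of_le_of_lt hσ hεδ) (lt_trans hε hεδ)
    have hbd : ∀ z, mTimeMap (skewDist (X := X) m) (skewMap f) ε δ z ≤ L + N :=
      fun z => Nat.sInf_le (key z)
    apply csSup_le'
    rintro v ⟨x, rfl⟩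
    set z : (ℕ → Fin m) × X := (fun _ => i0, x) with hz
    have hneF : {N' | ∀ n, N' ≤ n → ∀ y : (ℕ → Fin m) × X, ∃ z',
        skewDist (X := X) m z' z < δ ∧
        ChainFromMap (skewDist (X := X) m) (skewMap f) ε z' y n}.Nonempty := ⟨L + N, key z⟩
    have hmemF := Nat.sInf_mem hneF
    have hmemG : mTimeMap (skewDist (X := X) m) (skewMap f) ε δ z ∈
        {N' | ∀ n, N' ≤ n → ∀ y : X, ∃ zz, dist zz x < δ ∧ ChainFrom f ε zz y n} := by
      intro n hn y
      obtain ⟨z', hz', hch⟩ := hmemF n hn ((fun _ => i0), y)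
      refine ⟨z'.2, ?_, proj_chain f hch⟩
      exact lt_of_le_of_lt (le_max_right _ _) hz'
    have h1 : mTime f ε δ x ≤ mTimeMap (skewDist (X := X) m) (skewMap f) ε δ z :=
      Nat.sInf_le hmemG
    have h2 : mTimeMap (skewDist (X := X) m) (skewMap f) ε δ z ≤
        mTimeMapSup (skewDist (X := X) m) (skewMap f) ε δ :=
      le_csSup ⟨L + N, by rintro _ ⟨z', rfl⟩; exact hbd z'⟩ (Set.mem_range_self z)
    exact h1.trans h2
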